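/- Let A ⊂ ℤ^d be a finite set whose convex hull H(A) is a d-simplex, with 0 ∈ B := ex(H(A)). Suppose S(A,B∖{0}) is finite with K := K(A,B∖{0}) = max_{u ∈ S(A,B∖{0})} N_A(u), and fix a_0 ∈ A. Then for every integer N ≥ (d+1)(K−1)+1 the structure equation (∗) holds: NA = (N·H(A) ∩ (N·a_0 + Λ_{A−A})) ∖ ⋃_{b ∈ B} (N·b − E(b−A)). -/

import Mathlib

open Pointwise MeasureTheory

noncomputable section

/-- Embedding of integer vectors into real vectors. -/
def emb (d : ℕ) : (Fin d → ℤ) → (Fin d → ℝ) := fun x i => (x i : ℝ)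

/-- The `N`-fold sumset `NA` (with `0·A = {0}`). -/
def nfold (d : ℕ) (A : Set (Fin d → ℤ)) (N : ℕ) : Set (Fin d → ℤ) :=
  {x | ∃ f : Fin N → (Fin d → ℤ), (∀ i, f i ∈ A) ∧ x = ∑ i, f i}

/-- `P(A) = ⋃_{N ≥ 1} NA`. -/
def PA (d : ℕ) (A : Set (Fin d → ℤ)) : Set (Fin d → ℤ) :=
  ⋃ N ∈ Set.Ici 1, nfold d A N

/-- The width `w(A) = max_{a₁,a₂ ∈ A} ‖a₁ - a₂‖_∞`. -/
def width (d : ℕ) (A : Finset (Fin d → ℤ)) : ℕ :=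
  (A ×ˢ A).sup fun p => Finset.univ.sup fun i => (p.1 i - p.2 i).natAbs

/-- The convex hull `H(A)` in `ℝ^d`. -/
def hull (d : ℕ) (A : Finset (Fin d → ℤ)) : Set (Fin d → ℝ) :=
  convexHull ℝ (emb d '' ↑A)

/-- The cone `C_B = {∑_{b ∈ B} c_b b : c_b ≥ 0}` generated by `B`. -/
def cone (d : ℕ) (B : Finset (Fin d → ℤ)) : Set (Fin d → ℝ) :=
  {x | ∃ c : (Fin d → ℤ) → ℝ, (∀ a, 0 ≤ c a) ∧ x = ∑ a ∈ B, c a • emb d a}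

/-- The lattice (subgroup of `ℤ^d`) generated by a set `S`. -/
def latt (d : ℕ) (S : Set (Fin d → ℤ)) : AddSubgroup (Fin d → ℤ) :=
  AddSubgroup.closure S

/-- The exceptional set `E(A) = (C_A ∩ Λ_A) ∖ P(A)`, viewed inside `ℤ^d`. -/
def excep (d : ℕ) (A : Finset (Fin d → ℤ)) : Set (Fin d → ℤ) :=
  {x | emb d x ∈ cone d A ∧ x ∈ latt d ↑A ∧ x ∉ PA d ↑A}

/-- The set of (lattice) extreme points of `H(A)`: those `p` with `emb p ∈ H(A)` such that
some `v ∈ span ℝ (A - A)`, `v ≠ 0`, satisfies `⟨v,x⟩ > ⟨v,p⟩` for all `x ∈ H(A) ∖ {p}`. -/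
def exP (d : ℕ) (A : Finset (Fin d → ℤ)) : Set (Fin d → ℤ) :=
  {p | emb d p ∈ hull d A ∧
    ∃ v ∈ Submodule.span ℝ (emb d '' ((A : Set (Fin d → ℤ)) - (A : Set (Fin d → ℤ)))),
      v ≠ (0 : Fin d → ℝ) ∧
      ∀ x ∈ hull d A, x ≠ emb d p → (∑ i, v i * emb d p i) < ∑ i, v i * x i}

/-- The structure equation
`NA = (N·H(A) ∩ (N·a₀ + Λ_{A-A})) ∖ ⋃_{a ∈ ex(H(A))} (N·a - E(a - A))`. -/
def structEq (d : ℕ) (A : Finset (Fin d → ℤ)) (a0 : Fin d → ℤ) (N : ℕ) : Prop :=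
  emb d '' nfold d ↑A N =
    ((N : ℝ) • hull d A ∩
      emb d '' (({N • a0} : Set (Fin d → ℤ)) +
        (latt d ((A : Set (Fin d → ℤ)) - (A : Set (Fin d → ℤ))) : Set (Fin d → ℤ)))) \
    ⋃ a ∈ exP d A,
      emb d '' (({N • a} : Set (Fin d → ℤ)) - excep d (A.image fun y => a - y))

/-- `H(A)` is a `d`-simplex: there is `B ⊆ A` with `|B| = d+1`, `B - B` spanning `ℝ^d`,
and `H(A) = H(B)`. -/
def IsSimplex (d : ℕ) (A : Finset (Fin d → ℤ)) : Prop :=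
  ∃ B ⊆ A, B.card = d + 1 ∧
    Submodule.span ℝ (emb d '' ((B : Set (Fin d → ℤ)) - (B : Set (Fin d → ℤ)))) = ⊤ ∧
    hull d B = hull d A

/-- `N_A(v)`: the minimal positive `N` with `v ∈ NA`, and `N_A(0) = 0`. -/
def NAfn (d : ℕ) (A : Set (Fin d → ℤ)) (v : Fin d → ℤ) : ℕ :=
  if v = 0 then 0 else sInf {N : ℕ | 0 < N ∧ v ∈ nfold d A N}

/-- The set `S(A,B)` of `B`-minimal elements. -/
def Smin (d : ℕ) (A B : Set (Fin d → ℤ)) : Set (Fin d → ℤ) :=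
  {0} ∪ {u | u ∈ PA d A ∧ u ≠ 0 ∧
    ∀ f : Fin (NAfn d A u) → (Fin d → ℤ), (∀ i, f i ∈ A) → u = ∑ i, f i →
      ∀ i, f i ∉ B ∪ ({0} : Set (Fin d → ℤ))}

namespace Aux

variable {d : ℕ}

def embHom (d : ℕ) : (Fin d → ℤ) →+ (Fin d → ℝ) where
  toFun := emb d
  map_zero' := by funext i; simp [emb]
  map_add' x y := by funext i; simp [emb]

lemma emb_eq (x : Fin d → ℤ) : emb d x = embHom d x := rfl

lemma emb_injective : Function.Injective (emb d) := by
  intro x y h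
  funext i
  have := congrFun h i
  simp only [emb] at this
  exact_mod_cast this

@[simp] lemma emb_zero : emb d (0 : Fin d → ℤ) = 0 := (embHom d).map_zero

lemma emb_add (x y : Fin d → ℤ) : emb d (x + y) = emb d x + emb d y := (embHom d).map_add x y

lemma emb_sub (x y : Fin d → ℤ) : emb d (x - y) = emb d x - emb d y := map_sub (embHom d) x y

lemma emb_neg (x : Fin d → ℤ) : emb d (-x) = - emb d x := map_neg (embHom d) x

lemma emb_nsmul (n : ℕ) (x : Fin d → ℤ) : emb d (n • x) = (n : ℝ) • emb d x := by
  funext i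
  simp [emb]

lemma emb_sum {ι : Type*} (s : Finset ι) (f : ι → Fin d → ℤ) :
    emb d (∑ i ∈ s, f i) = ∑ i ∈ s, emb d (f i) := map_sum (embHom d) f s

lemma emb_multiset_sum (m : Multiset (Fin d → ℤ)) :
    emb d m.sum = (m.map (emb d)).sum := by
  rw [emb_eq, AddMonoidHom.map_multiset_sum]
  rfl

lemma mem_nfold_iff {A : Set (Fin d → ℤ)} {N : ℕ} {x : Fin d → ℤ} :
    x ∈ nfold d A N ↔
      ∃ m : Multiset (Fin d → ℤ), Multiset.card m = N ∧ (∀ a ∈ m, a ∈ A) ∧ m.sum = x := by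
  constructor
  · rintro ⟨f, hf, rfl⟩
    refine ⟨Finset.univ.val.map f, by simp, ?_, rfl⟩
    intro a ha
    obtain ⟨i, _, rfl⟩ := Multiset.mem_map.1 ha
    exact hf i
  · rintro ⟨m, hcard, hmem, rfl⟩
    have hlen : m.toList.length = N := by rw [Multiset.length_toList, hcard]
    refine ⟨fun i => m.toList.get (Fin.cast hlen.symm i), ?_, ?_⟩
    · intro i
      refine hmem _ (by rw [← Multiset.mem_toList]; apply List.get_mem)
    · rw [← Multiset.sum_toList, ← Fin.sum_univ_getElem m.toList]
      exact Fintype.sum_equiv (finCongr hlen) _ _ (fun i => rfl)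

lemma nfold_add {A : Set (Fin d → ℤ)} {M N : ℕ} {x y : Fin d → ℤ}
    (hx : x ∈ nfold d A M) (hy : y ∈ nfold d A N) : x + y ∈ nfold d A (M + N) := by
  rw [mem_nfold_iff] at hx hy ⊢
  obtain ⟨mx, hc1, hm1, rfl⟩ := hx
  obtain ⟨my, hc2, hm2, rfl⟩ := hy
  exact ⟨mx + my, by simp [hc1, hc2], by
    intro a ha; rcases Multiset.mem_add.1 ha with h | h; exacts [hm1 a h, hm2 a h], by simp⟩

lemma mem_nfold_one {A : Set (Fin d → ℤ)} {a : Fin d → ℤ} (ha : a ∈ A) : a ∈ nfold d A 1 := by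
  rw [mem_nfold_iff]
  exact ⟨{a}, by simp, by simpa using ha, by simp⟩

lemma zero_mem_nfold_zero {A : Set (Fin d → ℤ)} : (0 : Fin d → ℤ) ∈ nfold d A 0 := by
  rw [mem_nfold_iff]; exact ⟨0, by simp, by simp, by simp⟩

lemma nsmul_mem_nfold {A : Set (Fin d → ℤ)} {a : Fin d → ℤ} (ha : a ∈ A) (n : ℕ) :
    n • a ∈ nfold d A n := by
  rw [mem_nfold_iff]
  refine ⟨Multiset.replicate n a, by simp, ?_, by simp⟩
  intro x hx
  rw [Multiset.eq_of_mem_replicate hx]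
  exact ha

lemma mem_nfold_zero_iff {A : Set (Fin d → ℤ)} {x : Fin d → ℤ} :
    x ∈ nfold d A 0 ↔ x = 0 := by
  rw [mem_nfold_iff]
  constructor
  · rintro ⟨m, hc, -, rfl⟩
    rw [Multiset.card_eq_zero.1 hc]; simp
  · rintro rfl; exact ⟨0, by simp, by simp, by simp⟩

lemma mem_PA_iff {A : Set (Fin d → ℤ)} {x : Fin d → ℤ} :
    x ∈ PA d A ↔ ∃ N, 1 ≤ N ∧ x ∈ nfold d A N := by
  simp [PA]

lemma NAfn_spec {A : Set (Fin d → ℤ)} {x : Fin d → ℤ} (hx : x ≠ 0) (hP : x ∈ PA d A) :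
    0 < NAfn d A x ∧ x ∈ nfold d A (NAfn d A x) ∧
      ∀ N, 0 < N → x ∈ nfold d A N → NAfn d A x ≤ N := by
  obtain ⟨N, hN1, hNx⟩ := mem_PA_iff.1 hP
  have hne : {N : ℕ | 0 < N ∧ x ∈ nfold d A N}.Nonempty := ⟨N, hN1, hNx⟩
  have h1 := Nat.sInf_mem hne
  have : NAfn d A x = sInf {N : ℕ | 0 < N ∧ x ∈ nfold d A N} := if_neg hx
  rw [this]
  exact ⟨h1.1, h1.2, fun M hM1 hM2 => Nat.sInf_le ⟨hM1, hM2⟩⟩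

@[simp] lemma NAfn_zero {A : Set (Fin d → ℤ)} : NAfn d A 0 = 0 := if_pos rfl


def vfam (b : Fin (d+1) → (Fin d → ℤ)) (k : Fin (d+1)) :
    {j : Fin (d+1) // j ≠ k} → (Fin d → ℝ) := fun j => emb d (b k) - emb d (b ↑j)

lemma card_ne_k (k : Fin (d+1)) : Fintype.card {j : Fin (d+1) // j ≠ k} = d := by
  have : Fintype.card {j : Fin (d+1) // ¬ (j = k)} = Fintype.card (Fin (d+1)) - Fintype.card {j : Fin (d+1) // j = k} :=
    Fintype.card_subtype_compl _
  simpa [Fintype.card_subtype_eq] using this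

variable {B : Finset (Fin d → ℤ)} {b : Fin (d+1) → (Fin d → ℤ)}

lemma mem_span_vfam (hBb : ∀ z ∈ B, ∃ j, b j = z) (k : Fin (d+1)) {x : Fin d → ℤ} (hx : x ∈ B) :
    emb d (b k) - emb d x ∈ Submodule.span ℝ (Set.range (vfam b k)) := by
  obtain ⟨j, rfl⟩ := hBb x hx
  by_cases h : j = k
  · subst h; simp
  · exact Submodule.subset_span ⟨⟨j, h⟩, rfl⟩

lemma span_vfam
    (hspan : Submodule.span ℝ (emb d '' ((B : Set (Fin d → ℤ)) - (B : Set (Fin d → ℤ)))) = ⊤)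
    (hBb : ∀ z ∈ B, ∃ j, b j = z) (k : Fin (d+1)) :
    ⊤ ≤ Submodule.span ℝ (Set.range (vfam b k)) := by
  rw [← hspan]
  refine Submodule.span_le.2 ?_
  rintro y ⟨w, hw, rfl⟩
  obtain ⟨x, hx, z, hz, rfl⟩ := Set.mem_sub.1 hw
  rw [emb_sub]
  have h1 := mem_span_vfam hBb k (x := z) hz
  have h2 := mem_span_vfam hBb k (x := x) hx
  have : emb d x - emb d z = (emb d (b k) - emb d z) - (emb d (b k) - emb d x) := by ring
  rw [this]
  exact sub_mem h1 h2

def basK (hsp : ⊤ ≤ Submodule.span ℝ (Set.range (vfam b k))) :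
    Module.Basis {j : Fin (d+1) // j ≠ k} ℝ (Fin d → ℝ) :=
  basisOfTopLeSpanOfCardEqFinrank _ hsp
    (by rw [card_ne_k, Module.finrank_fintype_fun_eq_card]; simp)

lemma basK_apply (hsp : ⊤ ≤ Submodule.span ℝ (Set.range (vfam b k)))
    (j : {j : Fin (d+1) // j ≠ k}) : basK hsp j = vfam b k j := by
  rw [basK, coe_basisOfTopLeSpanOfCardEqFinrank]

lemma coord_combo (hsp : ⊤ ≤ Submodule.span ℝ (Set.range (vfam b k)))
    (j : {j : Fin (d+1) // j ≠ k}) (c : Fin (d+1) → ℝ) :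
    (basK hsp).coord j (∑ j' : Fin (d+1), c j' • (emb d (b k) - emb d (b j'))) = c j := by
  classical
  have h1 : (∑ j' : Fin (d+1), c j' • (emb d (b k) - emb d (b j'))) =
      ∑ j' : {j : Fin (d+1) // j ≠ k}, c ↑j' • basK hsp j' := by
    rw [← Finset.sum_erase_add Finset.univ _ (Finset.mem_univ k)]
    have hz : c k • (emb d (b k) - emb d (b k)) = 0 := by simp
    rw [hz, add_zero]
    rw [Finset.sum_subtype (p := fun j => j ≠ k) (Finset.univ.erase k) (by intro x; simp [Finset.mem_erase])
      (fun j' => c j' • (emb d (b k) - emb d (b j')))]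
    refine Finset.sum_congr rfl fun j' _ => ?_
    rw [basK_apply]
    rfl
  rw [h1, map_sum]
  have h2 : ∀ j' : {j : Fin (d+1) // j ≠ k},
      (basK hsp).coord j (c ↑j' • basK hsp j') = if j' = j then c ↑j' else 0 := by
    intro j'
    rw [_root_.map_smul, Module.Basis.coord_apply, Module.Basis.repr_self, smul_eq_mul, Finsupp.single_apply]
    split <;> simp
  rw [Finset.sum_congr rfl (fun j' _ => h2 j')]
  simp


lemma sum_over_B {B : Finset (Fin d → ℤ)} {b : Fin (d+1) → (Fin d → ℤ)}
    (hbinj : Function.Injective b) (hbB : ∀ j, b j ∈ B) (hBb : ∀ z ∈ B, ∃ j, b j = z)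
    {M : Type*} [AddCommMonoid M] (F : (Fin d → ℤ) → M) :
    ∑ j : Fin (d+1), F (b j) = ∑ x ∈ B, F x := by
  refine Finset.sum_bij (fun j _ => b j) (fun j _ => hbB j) ?_ ?_ (fun j _ => rfl)
  · intro j _ j' _ h
    exact hbinj h
  · intro z hz
    obtain ⟨j, rfl⟩ := hBb z hz
    exact ⟨j, Finset.mem_univ j, rfl⟩

lemma hull_rep {B : Finset (Fin d → ℤ)} {b : Fin (d+1) → (Fin d → ℤ)}
    (hbinj : Function.Injective b) (hbB : ∀ j, b j ∈ B) (hBb : ∀ z ∈ B, ∃ j, b j = z)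
    {z : Fin d → ℝ} (hz : z ∈ hull d B) :
    ∃ t : Fin (d+1) → ℝ, (∀ j, 0 ≤ t j) ∧ ∑ j, t j = 1 ∧ z = ∑ j, t j • emb d (b j) := by
  classical
  have hz' : z ∈ convexHull ℝ (↑(B.image (emb d))) := by
    rw [Finset.coe_image]; exact hz
  obtain ⟨w, hw0, hw1, hwz⟩ := Finset.mem_convexHull.1 hz'
  refine ⟨fun j => w (emb d (b j)), fun j => hw0 _ (Finset.mem_image_of_mem _ (hbB j)), ?_, ?_⟩
  · rw [sum_over_B hbinj hbB hBb (fun x => w (emb d x))]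
    rw [← Finset.sum_image (g := emb d) (fun x _ y _ h => emb_injective h)]
    exact hw1
  · rw [← hwz, Finset.centerMass_eq_of_sum_1 _ id hw1]
    rw [Finset.sum_image (g := emb d) (fun x _ y _ h => emb_injective h)]
    rw [Finset.sum_congr rfl (fun x _ => by rw [id_eq] : ∀ x ∈ B, w (emb d x) • id (emb d x) = w (emb d x) • emb d x)]
    rw [sum_over_B hbinj hbB hBb (fun x => w (emb d x) • emb d x)]

lemma coord_nonneg {B : Finset (Fin d → ℤ)} {b : Fin (d+1) → (Fin d → ℤ)} {k : Fin (d+1)}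
    (hbinj : Function.Injective b) (hbB : ∀ j, b j ∈ B) (hBb : ∀ z ∈ B, ∃ j, b j = z)
    (hsp : ⊤ ≤ Submodule.span ℝ (Set.range (vfam b k)))
    (j : {j : Fin (d+1) // j ≠ k}) {z : Fin d → ℝ} (hz : z ∈ hull d B) :
    0 ≤ (basK hsp).coord j (emb d (b k) - z) := by
  obtain ⟨t, ht0, ht1, rfl⟩ := hull_rep hbinj hbB hBb hz
  have h : emb d (b k) - ∑ j', t j' • emb d (b j') =
      ∑ j' : Fin (d+1), t j' • (emb d (b k) - emb d (b j')) := by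
    rw [Finset.sum_congr rfl (fun j' _ => smul_sub (t j') (emb d (b k)) (emb d (b j')))]
    rw [Finset.sum_sub_distrib, ← Finset.sum_smul, ht1, one_smul]
  rw [h, coord_combo]
  exact ht0 j

def vecOf (L : (Fin d → ℝ) →ₗ[ℝ] ℝ) : Fin d → ℝ := fun i => L (fun j => if i = j then 1 else 0)

lemma vecOf_spec (L : (Fin d → ℝ) →ₗ[ℝ] ℝ) (y : Fin d → ℝ) :
    ∑ i, vecOf L i * y i = L y := by
  conv_rhs => rw [pi_eq_sum_univ y, map_sum]
  refine Finset.sum_congr rfl fun i _ => ?_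
  rw [_root_.map_smul, smul_eq_mul, mul_comm]
  rfl

lemma exP_eq {A B : Finset (Fin d → ℤ)} {b : Fin (d+1) → (Fin d → ℤ)}
    (hd : 0 < d) (hB : B ⊆ A)
    (hspan : Submodule.span ℝ (emb d '' ((B : Set (Fin d → ℤ)) - (B : Set (Fin d → ℤ)))) = ⊤)
    (hhull : hull d B = hull d A)
    (hbinj : Function.Injective b) (hbB : ∀ j, b j ∈ B) (hBb : ∀ z ∈ B, ∃ j, b j = z) :
    exP d A = ↑B := by
  classical
  have hspanvk : ∀ k : Fin (d+1), ⊤ ≤ Submodule.span ℝ (Set.range (vfam b k)) :=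
    fun k => span_vfam hspan hBb k
  apply Set.Subset.antisymm
  · rintro p ⟨hp, v, -, -, hstrict⟩
    rw [← hhull] at hp
    obtain ⟨t, ht0, ht1, hrep⟩ := hull_rep hbinj hbB hBb hp
    by_contra hpB
    have hne : ∀ j, emb d (b j) ≠ emb d p := by
      intro j h
      exact hpB (emb_injective h ▸ hbB j)
    have hmem : ∀ j, emb d (b j) ∈ hull d A := fun j =>
      subset_convexHull ℝ _ ⟨b j, hB (hbB j), rfl⟩
    set L := fun y : Fin d → ℝ => ∑ i, v i * y i with hL
    have key : L (emb d p) = ∑ j, t j * L (emb d (b j)) := by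
      rw [hL]
      simp only [hrep]
      rw [Finset.sum_congr rfl (fun i (_ : i ∈ Finset.univ) => by
        rw [Finset.sum_apply, Finset.mul_sum] :
          ∀ i ∈ Finset.univ, v i * (∑ j, t j • emb d (b j)) i
            = ∑ j, v i * (t j • emb d (b j)) i)]
      rw [Finset.sum_comm]
      refine Finset.sum_congr rfl fun j _ => ?_
      rw [Finset.mul_sum]
      refine Finset.sum_congr rfl fun i _ => ?_
      simp [Pi.smul_apply, smul_eq_mul]
      ring
    have hlt : ∀ j, L (emb d p) < L (emb d (b j)) := fun j =>
      hstrict _ (hmem j) (hne j)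
    obtain ⟨j0, -, hj0⟩ : ∃ j0 ∈ Finset.univ, t j0 ≠ 0 :=
      Finset.exists_ne_zero_of_sum_ne_zero (by rw [ht1]; norm_num)
    have hj0pos : 0 < t j0 := lt_of_le_of_ne (ht0 j0) (Ne.symm hj0)
    have hcon : L (emb d p) < ∑ j, t j * L (emb d (b j)) := by
      calc L (emb d p) = ∑ j, t j * L (emb d p) := by
            rw [← Finset.sum_mul, ht1, one_mul]
        _ < ∑ j, t j * L (emb d (b j)) := by
            refine Finset.sum_lt_sum (fun j _ => ?_) ⟨j0, Finset.mem_univ j0, ?_⟩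
            · exact mul_le_mul_of_nonneg_left (le_of_lt (hlt j)) (ht0 j)
            · exact mul_lt_mul_of_pos_left (hlt j0) hj0pos
    rw [← key] at hcon
    exact lt_irrefl _ hcon
  · intro p hp
    obtain ⟨k, rfl⟩ := hBb p hp
    set bas := basK (hspanvk k) with hbas
    set φ : (Fin d → ℝ) →ₗ[ℝ] ℝ := ∑ j : {j : Fin (d+1) // j ≠ k}, bas.coord j with hφ
    have hφapp : ∀ y, φ y = ∑ j : {j : Fin (d+1) // j ≠ k}, bas.coord j y := by
      intro y
      rw [hφ, LinearMap.sum_apply]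
    set ψ : (Fin d → ℝ) →ₗ[ℝ] ℝ := -φ with hψ
    have hφnn : ∀ x ∈ hull d A, 0 ≤ φ (emb d (b k) - x) := by
      intro x hx
      rw [← hhull] at hx
      rw [hφapp]
      exact Finset.sum_nonneg fun j _ => coord_nonneg hbinj hbB hBb (hspanvk k) j hx
    have hφpos : ∀ x ∈ hull d A, x ≠ emb d (b k) → 0 < φ (emb d (b k) - x) := by
      intro x hx hxne
      rcases lt_or_eq_of_le (hφnn x hx) with h | h
      · exact h
      · exfalso
        rw [← hhull] at hx
        have hall : ∀ j : {j : Fin (d+1) // j ≠ k}, bas.coord j (emb d (b k) - x) = 0 := by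
          have := (Finset.sum_eq_zero_iff_of_nonneg
            (fun j (_ : j ∈ Finset.univ) => coord_nonneg hbinj hbB hBb (hspanvk k) j hx)).1
            (by rw [← hφapp, ← h])
          exact fun j => this j (Finset.mem_univ j)
        have : emb d (b k) - x = 0 := (Module.Basis.forall_coord_eq_zero_iff bas).1 hall
        exact hxne (sub_eq_zero.1 this).symm
    refine ⟨subset_convexHull ℝ _ ⟨b k, hB (hbB k), rfl⟩, vecOf ψ, ?_, ?_, ?_⟩
    · have : Submodule.span ℝ (emb d '' ((A : Set (Fin d → ℤ)) - (A : Set (Fin d → ℤ)))) = ⊤ := by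
        rw [eq_top_iff, ← hspan]
        exact Submodule.span_mono (Set.image_mono (Set.sub_subset_sub hB hB))
      rw [this]
      trivial
    · intro hv0
      obtain ⟨j1, hj1⟩ : ∃ j1 : Fin (d+1), j1 ≠ k := by
        have : Nontrivial (Fin (d+1)) := Fin.nontrivial_iff_two_le.2 (by omega)
        exact exists_ne k
      have h1 : φ (vfam b k ⟨j1, hj1⟩) = 1 := by
        rw [hφapp]
        rw [Finset.sum_congr rfl (fun j _ => by
          rw [← basK_apply (hspanvk k), ← hbas, Module.Basis.coord_apply, Module.Basis.repr_self,
            Finsupp.single_apply] :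
          ∀ j ∈ Finset.univ, bas.coord j (vfam b k ⟨j1, hj1⟩)
            = if (⟨j1, hj1⟩ : {j : Fin (d+1) // j ≠ k}) = j then 1 else 0)]
        simp
      have h2 : ψ (vfam b k ⟨j1, hj1⟩) = -1 := by rw [hψ, LinearMap.neg_apply, h1]
      have h3 := vecOf_spec ψ (vfam b k ⟨j1, hj1⟩)
      rw [hv0] at h3
      simp at h3
      rw [h2] at h3
      norm_num at h3
    · intro x hx hxne
      rw [vecOf_spec, vecOf_spec]
      have : 0 < φ (emb d (b k) - x) := hφpos x hx hxne
      have hsub : ψ x - ψ (emb d (b k)) = φ (emb d (b k) - x) := by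
        simp only [hψ, LinearMap.neg_apply]
        have h := map_sub φ (emb d (b k)) x
        linarith [h]
      linarith [hsub]

lemma map_sub_sum (bk : Fin d → ℤ) (X : Multiset (Fin d → ℤ)) :
    (X.map (fun z => bk - z)).sum = (Multiset.card X) • bk - X.sum := by
  induction X using Multiset.induction_on with
  | empty => simp
  | cons a X ih =>
    simp only [Multiset.map_cons, Multiset.sum_cons, Multiset.card_cons, ih, add_nsmul, one_nsmul]
    abel

lemma key_decomp {A B : Finset (Fin d → ℤ)} {b : Fin (d+1) → (Fin d → ℤ)} {k : Fin (d+1)}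
    (hB : B ⊆ A) (hbinj : Function.Injective b) (hbB : ∀ j, b j ∈ B)
    (hBb : ∀ z ∈ B, ∃ j, b j = z)
    (hexP : exP d A = ↑B)
    (h0B : (0 : Fin d → ℤ) ∈ B)
    {K : ℕ} (hK : ∀ s ∈ Smin d ↑A (exP d A \ {0}), NAfn d ↑A s ≤ K)
    {u : Fin d → ℤ} (hu0 : u ≠ 0)
    (huP : u ∈ PA d ↑(A.image fun y => b k - y)) :
    ∃ (m : ℕ) (n : Fin (d+1) → ℕ) (w : Fin d → ℤ),
      NAfn d ↑(A.image fun y => b k - y) u = m + ∑ j, n j ∧ n k = 0 ∧ m ≤ K ∧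
      w ∈ nfold d ↑(A.image fun y => b k - y) m ∧ u = w + ∑ j, n j • (b k - b j) := by
  classical
  set A' : Set (Fin d → ℤ) := ↑(A.image fun y => b k - y) with hA'
  have hmemA' : ∀ z : Fin d → ℤ, z ∈ A' ↔ ∃ a ∈ A, z = b k - a := by
    intro z
    simp [hA', eq_comm]
  have hsubA' : ∀ z ∈ A', b k - z ∈ (A : Finset (Fin d → ℤ)) := by
    intro z hz
    obtain ⟨a, ha, rfl⟩ := (hmemA' z).1 hz
    simpa using ha
  have hbkA' : b k ∈ A' := (hmemA' _).2 ⟨0, hB h0B, by simp⟩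
  obtain ⟨hMpos, huM, hMmin⟩ := NAfn_spec hu0 huP
  set M := NAfn d A' u with hM
  set vert : (Fin d → ℤ) → Prop :=
    fun z => z ∈ Finset.image (fun j => b k - b j) (Finset.univ.erase k) with hvert
  set Reps : Set (Multiset (Fin d → ℤ)) :=
    {mm | Multiset.card mm = M ∧ (∀ a ∈ mm, a ∈ A') ∧ mm.sum = u} with hReps
  have hReps_ne : Reps.Nonempty := by
    obtain ⟨mm, h1, h2, h3⟩ := mem_nfold_iff.1 huM
    exact ⟨mm, h1, h2, h3⟩
  set cnt : Multiset (Fin d → ℤ) → ℕ := fun mm => Multiset.card (mm.filter vert) with hcnt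
  have hbdd : BddAbove (cnt '' Reps) := by
    refine ⟨M, ?_⟩
    rintro t ⟨mm, hmm, rfl⟩
    calc cnt mm ≤ Multiset.card mm := Multiset.card_le_card (Multiset.filter_le _ _)
    _ = M := hmm.1
  obtain ⟨mm, hmmReps, hmmcnt⟩ : sSup (cnt '' Reps) ∈ cnt '' Reps :=
    Nat.sSup_mem (hReps_ne.image cnt) hbdd
  have hmax : ∀ mm' ∈ Reps, cnt mm' ≤ cnt mm := by
    intro mm' h
    rw [hmmcnt]
    exact le_csSup hbdd ⟨mm', h, rfl⟩
  set V := mm.filter vert with hV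
  set W := mm.filter (fun z => ¬ vert z) with hW
  have hVW : V + W = mm := Multiset.filter_add_not vert mm
  have hVvert : ∀ z ∈ V, vert z := fun z hz => Multiset.of_mem_filter hz
  have hcntV : cnt mm = Multiset.card V := rfl
  set m := Multiset.card W with hm
  have hMsplit : M = Multiset.card V + m := by
    rw [← hmmReps.1, ← hVW, Multiset.card_add]
  set w := W.sum with hw
  set s := (W.map (fun z => b k - z)).sum with hs
  have hws : w = m • b k - s := by
    rw [hs, map_sub_sum, ← hm, hw]
    abel
  have hWA' : ∀ z ∈ W, z ∈ A' := fun z hz => hmmReps.2.1 z (hVW ▸ Multiset.mem_add.2 (Or.inr hz))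
  have hVA' : ∀ z ∈ V, z ∈ A' := fun z hz => hmmReps.2.1 z (hVW ▸ Multiset.mem_add.2 (Or.inl hz))
  have husum : u = V.sum + w := by rw [hw, ← Multiset.sum_add, hVW, hmmReps.2.2]
  -- building a representation of u from a representation of s
  have hbuild : ∀ h : Multiset (Fin d → ℤ), (∀ a ∈ h, (a : Fin d → ℤ) ∈ A) → h.sum = s →
      Multiset.card h ≤ m →
      (V + h.map (fun a => b k - a) + Multiset.replicate (m - Multiset.card h) (b k)) ∈ Reps := by
    intro h hhA hhs hle
    refine ⟨?_, ?_, ?_⟩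
    · simp only [Multiset.card_add, Multiset.card_map, Multiset.card_replicate]
      omega
    · intro z hz
      rcases Multiset.mem_add.1 hz with hz | hz
      · rcases Multiset.mem_add.1 hz with hz | hz
        · exact hVA' z hz
        · obtain ⟨a, ha, rfl⟩ := Multiset.mem_map.1 hz
          exact (hmemA' _).2 ⟨a, hhA a ha, rfl⟩
      · rw [Multiset.eq_of_mem_replicate hz]
        exact hbkA'
    · rw [Multiset.sum_add, Multiset.sum_add, map_sub_sum, hhs, Multiset.sum_replicate]
      have hnsmul : Multiset.card h • b k + (m - Multiset.card h) • b k = m • b k := by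
        rw [← add_nsmul]
        congr 1
        omega
      calc V.sum + (Multiset.card h • b k - s) + (m - Multiset.card h) • b k
          = V.sum + ((Multiset.card h • b k + (m - Multiset.card h) • b k) - s) := by abel
        _ = V.sum + (m • b k - s) := by rw [hnsmul]
        _ = u := by rw [← hws, ← husum]
  -- any representation of s (by elements of A) has at least m elements
  have hsmin : ∀ h : Multiset (Fin d → ℤ), (∀ a ∈ h, (a : Fin d → ℤ) ∈ A) → h.sum = s →
      m ≤ Multiset.card h := by
    intro h hhA hhs
    by_contra hlt
    push_neg at hlt
    have hle : Multiset.card h ≤ m := le_of_lt hlt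
    set rep := V + h.map (fun a => b k - a) + Multiset.replicate (m - Multiset.card h) (b k) with hrep
    have hrepReps : rep ∈ Reps := hbuild h hhA hhs hle
    by_cases hbk : b k = 0
    · -- remove the zeros to get a shorter representation
      set rep' := V + h.map (fun a => b k - a) with hrep'
      have hcard' : Multiset.card rep' = Multiset.card V + Multiset.card h := by
        simp [hrep']
      have hsum' : rep'.sum = u := by
        have := hrepReps.2.2
        rw [hrep, Multiset.sum_add, Multiset.sum_replicate, hbk] at this
        simpa [hrep', Multiset.sum_add] using this
      have hmem' : ∀ z ∈ rep', z ∈ A' := by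
        intro z hz
        exact hrepReps.2.1 z (by rw [hrep]; exact Multiset.mem_add.2 (Or.inl hz))
      have hpos : 0 < Multiset.card rep' := by
        rcases Nat.eq_zero_or_pos (Multiset.card rep') with h0 | h0
        · exfalso
          apply hu0
          rw [← hsum', Multiset.card_eq_zero.1 h0, Multiset.sum_zero]
        · exact h0
      have := hMmin _ hpos (mem_nfold_iff.2 ⟨rep', rfl, hmem', hsum'⟩)
      omega
    · -- the padded copies of b k are vertices, contradicting maximality
      have hbkvert : vert (b k) := by
        obtain ⟨j0, hj0⟩ := hBb 0 h0B
        have hj0k : j0 ≠ k := by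
          intro hkk
          rw [hkk] at hj0
          exact hbk hj0
        rw [hvert]
        refine Finset.mem_image.2 ⟨j0, Finset.mem_erase.2 ⟨hj0k, Finset.mem_univ _⟩, by rw [hj0, sub_zero]⟩
      have hcntrep : Multiset.card V + (m - Multiset.card h) ≤ cnt rep := by
        have e1 : Multiset.filter vert V = V := Multiset.filter_eq_self.2 hVvert
        have e2 : Multiset.filter vert (Multiset.replicate (m - Multiset.card h) (b k))
            = Multiset.replicate (m - Multiset.card h) (b k) :=
          Multiset.filter_eq_self.2
            (fun z hz => by rw [Multiset.eq_of_mem_replicate hz]; exact hbkvert)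
        rw [hcnt]
        simp only [hrep, Multiset.filter_add, Multiset.card_add]
        rw [e1, e2]
        simp only [Multiset.card_replicate]
        omega
      have := hmax rep hrepReps
      rw [hcntV] at this
      omega
  -- s is nonzero unless m = 0, and then it lies in Smin
  have hmK : m ≤ K := by
    rcases Nat.eq_zero_or_pos m with hm0 | hmpos
    · omega
    · have hsne : s ≠ 0 := by
        intro h0
        have := hsmin 0 (by simp) (by simp [h0])
        simp at this
        omega
      have hsrep : s ∈ nfold d (↑A : Set (Fin d → ℤ)) m := by
        refine mem_nfold_iff.2 ⟨W.map (fun z => b k - z), by simp [hm], ?_, rfl⟩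
        intro a ha
        obtain ⟨z, hz, rfl⟩ := Multiset.mem_map.1 ha
        exact hsubA' z (hWA' z hz)
      have hsPA : s ∈ PA d ↑A := mem_PA_iff.2 ⟨m, hmpos, hsrep⟩
      obtain ⟨hNpos, hNmem, hNmin⟩ := NAfn_spec hsne hsPA
      have hNs : NAfn d (↑A : Set (Fin d → ℤ)) s = m := by
        have h1 : NAfn d (↑A : Set (Fin d → ℤ)) s ≤ m := hNmin m hmpos hsrep
        obtain ⟨hh, hc, hmemh, hsumh⟩ := mem_nfold_iff.1 hNmem
        have h2 := hsmin hh hmemh hsumh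
        omega
      have hsSmin : s ∈ Smin d ↑A (exP d A \ {0}) := by
        refine Set.mem_union_right _ ⟨hsPA, hsne, ?_⟩
        intro f hfA hfsum i0
        intro hbad
        -- f i0 is a vertex (or 0); derive a contradiction
        have hfi0B : f i0 ∈ B := by
          rcases hbad with hbad | hbad
          · rw [hexP] at hbad
            exact hbad.1
          · rw [Set.mem_singleton_iff.1 hbad]
            exact h0B
        obtain ⟨j1, hj1⟩ := hBb _ hfi0B
        set h : Multiset (Fin d → ℤ) := Finset.univ.val.map f with hh
        have hhcard : Multiset.card h = NAfn d (↑A : Set (Fin d → ℤ)) s := by simp [hh]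
        have hhA : ∀ a ∈ h, (a : Fin d → ℤ) ∈ A := by
          intro a ha
          obtain ⟨i, _, rfl⟩ := Multiset.mem_map.1 ha
          exact hfA i
        have hhsum : h.sum = s := by
          have he : (Multiset.map f Finset.univ.val).sum = ∑ i, f i := rfl
          rw [hh, he, ← hfsum]
        have hhle : Multiset.card h ≤ m := by rw [hhcard, hNs]
        set rep := V + h.map (fun a => b k - a) + Multiset.replicate (m - Multiset.card h) (b k) with hrep
        have hrepReps : rep ∈ Reps := hbuild h hhA hhsum hhle
        have hfi0h : f i0 ∈ h := by
          rw [hh]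
          exact Multiset.mem_map_of_mem _ (Finset.mem_univ i0)
        have hz0mem : b k - f i0 ∈ rep := by
          rw [hrep]
          refine Multiset.mem_add.2 (Or.inl (Multiset.mem_add.2 (Or.inr ?_)))
          exact Multiset.mem_map_of_mem _ hfi0h
        by_cases hj1k : j1 = k
        · -- f i0 = b k : the representation contains 0, contradicting minimality of M
          have hz0 : b k - f i0 = 0 := by rw [← hj1, hj1k, sub_self]
          set rep' := rep.erase (0 : Fin d → ℤ) with hrep'
          have h0rep : (0 : Fin d → ℤ) ∈ rep := hz0 ▸ hz0mem
          have hcard' : Multiset.card rep' = M - 1 := by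
            rw [hrep', Multiset.card_erase_of_mem h0rep, hrepReps.1]
            rfl
          have hsum' : rep'.sum = u := by
            have := Multiset.cons_erase h0rep
            have h2 : rep.sum = (0 : Fin d → ℤ) + rep'.sum := by
              conv_lhs => rw [← this]
              rw [Multiset.sum_cons]
            rw [hrepReps.2.2] at h2
            simpa using h2.symm
          have hmem' : ∀ z ∈ rep', z ∈ A' :=
            fun z hz => hrepReps.2.1 z (Multiset.mem_of_mem_erase hz)
          have hpos : 0 < Multiset.card rep' := by
            rcases Nat.eq_zero_or_pos (Multiset.card rep') with hc0 | hc0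
            · exfalso
              apply hu0
              rw [← hsum', Multiset.card_eq_zero.1 hc0, Multiset.sum_zero]
            · exact hc0
          have := hMmin _ hpos (mem_nfold_iff.2 ⟨rep', rfl, hmem', hsum'⟩)
          omega
        · -- f i0 ≠ b k : extra vertex, contradicting maximality
          have hz0vert : vert (b k - f i0) := by
            rw [hvert]
            exact Finset.mem_image.2 ⟨j1, Finset.mem_erase.2 ⟨hj1k, Finset.mem_univ _⟩, by rw [hj1]⟩
          have hcntrep : Multiset.card V + 1 ≤ cnt rep := by
            have e1 : Multiset.filter vert V = V := Multiset.filter_eq_self.2 hVvert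
            rw [hcnt]
            simp only [hrep, Multiset.filter_add, Multiset.card_add]
            rw [e1]
            have h1 : 0 < Multiset.card ((h.map (fun a => b k - a)).filter vert) := by
              rw [Multiset.card_pos_iff_exists_mem]
              exact ⟨b k - f i0, Multiset.mem_filter.2
                ⟨Multiset.mem_map_of_mem _ hfi0h, hz0vert⟩⟩
            omega
          have := hmax rep hrepReps
          rw [hcntV] at this
          omega
      rw [← hNs]
      exact hK s hsSmin
  -- extract the vertex counts from V
  set n : Fin (d+1) → ℕ := fun j => if j = k then 0 else V.count (b k - b j) with hn
  have hVsub : ∀ z ∈ V.toFinset, z ∈ Finset.image (fun j => b k - b j) (Finset.univ.erase k) := by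
    intro z hz
    exact hVvert z (Multiset.mem_toFinset.1 hz)
  have hinj2 : ∀ x ∈ Finset.univ.erase k, ∀ y ∈ Finset.univ.erase k,
      b k - b x = b k - b y → x = y := by
    intro x _ y _ hxy
    exact hbinj (sub_right_inj.1 hxy)
  have hVsum : V.sum = ∑ j, n j • (b k - b j) := by
    have h1 : V.sum = ∑ z ∈ V.toFinset, V.count z • z := by
      conv_lhs => rw [← Multiset.map_id' V]
      rw [Finset.sum_multiset_map_count]
      try simp
    rw [h1]
    rw [Finset.sum_subset hVsub (by
      intro z _ hz
      rw [Multiset.count_eq_zero_of_notMem (fun hmem => hz (Multiset.mem_toFinset.2 hmem))]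
      simp)]
    rw [Finset.sum_image hinj2]
    rw [← Finset.sum_erase_add Finset.univ _ (Finset.mem_univ k)]
    have hk0 : n k • (b k - b k) = 0 := by simp
    rw [hk0, add_zero]
    refine Finset.sum_congr rfl fun j hj => ?_
    simp only [Finset.mem_erase] at hj
    simp [hn, hj.1]
  have hVcard : Multiset.card V = ∑ j, n j := by
    have h1 : Multiset.card V = ∑ z ∈ V.toFinset, V.count z :=
      (Multiset.toFinset_sum_count_eq V).symm
    rw [h1]
    rw [Finset.sum_subset hVsub (by
      intro z _ hz
      exact Multiset.count_eq_zero_of_notMem (fun hmem => hz (Multiset.mem_toFinset.2 hmem)))]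
    rw [Finset.sum_image hinj2]
    rw [← Finset.sum_erase_add Finset.univ n (Finset.mem_univ k)]
    have hk0 : n k = 0 := by rw [hn]; simp
    rw [hk0, add_zero]
    refine Finset.sum_congr rfl fun j hj => ?_
    simp only [Finset.mem_erase] at hj
    simp [hn, hj.1]
  refine ⟨m, n, w, ?_, by rw [hn]; simp, hmK, ?_, ?_⟩
  · rw [hMsplit, hVcard]
    omega
  · exact mem_nfold_iff.2 ⟨W, rfl, hWA', rfl⟩
  · rw [husum, ← hVsum]
    abel

end Aux

/-- Structure theorem for simplices in terms of `K = K(A, B ∖ {0})` where `B = ex(H(A))`: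
the structure equation holds for all `N ≥ (d+1)(K-1)+1`. -/
theorem structure_simplex_K (d : ℕ) (A : Finset (Fin d → ℤ)) (hsimp : IsSimplex d A)
    (h0 : (0 : Fin d → ℤ) ∈ exP d A)
    (hfin : (Smin d ↑A (exP d A \ {0})).Finite)
    (K : ℕ) (hK : IsGreatest (NAfn d ↑A '' Smin d ↑A (exP d A \ {0})) K)
    (a0 : Fin d → ℤ) (ha0 : a0 ∈ A) :
    ∀ N : ℕ, ((d : ℤ) + 1) * ((K : ℤ) - 1) + 1 ≤ (N : ℤ) → structEq d A a0 N := by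
  classical
  open Aux in
  obtain ⟨B, hB, hcard, hspan, hhull⟩ := hsimp
  have hd : 0 < d := by
    by_contra hdc
    push_neg at hdc
    interval_cases d
    obtain ⟨-, v, -, hv0, -⟩ := h0
    exact hv0 (funext fun i => Fin.elim0 i)
  have e := Finset.equivFinOfCardEq hcard
  set b : Fin (d+1) → (Fin d → ℤ) := fun j => ↑(e.symm j) with hb
  have hbinj : Function.Injective b := fun j j' h => by
    have := Subtype.ext (p := fun z => z ∈ B) h
    exact e.symm.injective this
  have hbB : ∀ j, b j ∈ B := fun j => (e.symm j).2
  have hBb : ∀ z ∈ B, ∃ j, b j = z := fun z hz => ⟨e ⟨z, hz⟩, by simp [hb]⟩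
  have hexP : exP d A = ↑B := exP_eq hd hB hspan hhull hbinj hbB hBb
  have h0B : (0 : Fin d → ℤ) ∈ B := by
    rw [hexP] at h0
    exact h0
  have h0A : (0 : Fin d → ℤ) ∈ A := hB h0B
  have hKup : ∀ s ∈ Smin d ↑A (exP d A \ {0}), NAfn d ↑A s ≤ K := fun s hs =>
    hK.2 ⟨s, hs, rfl⟩
  have hsubA' : ∀ (k' : Fin (d+1)) (z : Fin d → ℤ),
      z ∈ (↑(A.image fun y => b k' - y) : Set (Fin d → ℤ)) → b k' - z ∈ A := by
    intro k' z hz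
    obtain ⟨a, ha, rfl⟩ := Finset.mem_image.1 hz
    simpa using ha
  intro N hN
  unfold structEq
  apply Set.eq_of_subset_of_subset
  · -- NA ⊆ RHS
    rintro y ⟨x, hx, rfl⟩
    obtain ⟨f, hf, rfl⟩ := hx
    constructor
    · constructor
      · -- in N • hull A
        rcases Nat.eq_zero_or_pos N with hN0 | hN0
        · subst hN0
          refine ⟨emb d 0, subset_convexHull ℝ _ ⟨0, h0A, rfl⟩, by simp⟩
        · have hNne : (N:ℝ) ≠ 0 := Nat.cast_ne_zero.2 (Nat.pos_iff_ne_zero.1 hN0)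
          have hcm : Finset.univ.centerMass (fun _ : Fin N => (1:ℝ))
              (fun i => emb d (f i)) ∈ hull d A := by
            refine Finset.centerMass_mem_convexHull _ (fun i _ => zero_le_one) ?_
              (fun i _ => ⟨f i, hf i, rfl⟩)
            · rw [Finset.sum_const, Finset.card_univ, Fintype.card_fin]
              simp [hN0]
          have hcmval : Finset.univ.centerMass (fun _ : Fin N => (1:ℝ))
              (fun i => emb d (f i)) = (N:ℝ)⁻¹ • ∑ i, emb d (f i) := by
            rw [Finset.centerMass]
            simp [Finset.card_univ]
          refine ⟨_, hcm, ?_⟩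
          rw [hcmval, emb_sum]
          simp only [smul_smul]
          rw [mul_inv_cancel₀ hNne, one_smul]
      · -- in emb '' ({N•a0} + latt)
        refine ⟨∑ i, f i, ?_, rfl⟩
        refine Set.mem_add.2 ⟨N • a0, rfl, (∑ i, f i) - N • a0, ?_, by abel⟩
        have heq : (∑ i, f i) - N • a0 = ∑ i : Fin N, (f i - a0) := by
          rw [Finset.sum_sub_distrib, Finset.sum_const, Finset.card_univ, Fintype.card_fin]
        rw [heq]
        exact AddSubgroup.sum_mem _ fun i _ =>
          AddSubgroup.subset_closure ⟨f i, hf i, a0, ha0, rfl⟩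
    · -- not in the union
      intro hmem
      obtain ⟨a, haexP, hy⟩ := Set.mem_iUnion₂.1 hmem
      obtain ⟨zz, hzz, hezz⟩ := hy
      have hzx : zz = ∑ i, f i := emb_injective hezz
      obtain ⟨p, hp, q, hq, hpq⟩ := Set.mem_sub.1 hzz
      rw [Set.mem_singleton_iff.1 hp] at hpq
      have hq' : q = N • a - ∑ i, f i := by rw [hzx] at hpq; rw [← hpq]; abel
      have haA : a ∈ A := hB (by rw [hexP] at haexP; exact haexP)
      have hqP : q ∈ PA d ↑(A.image fun y => a - y) := by
        rcases Nat.eq_zero_or_pos N with hN0 | hN0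
        · subst hN0
          have : q = 0 := by
            rw [hq']
            rw [show (∑ i : Fin 0, f i) = 0 from Finset.sum_empty]
            simp
          rw [this]
          refine mem_PA_iff.2 ⟨1, le_refl 1, mem_nfold_one ?_⟩
          have : (0 : Fin d → ℤ) = a - a := by simp
          rw [this]
          exact Finset.mem_coe.2 (Finset.mem_image_of_mem _ haA)
        · refine mem_PA_iff.2 ⟨N, hN0, mem_nfold_iff.2
            ⟨Finset.univ.val.map (fun i => a - f i), by simp, ?_, ?_⟩⟩
          · intro z hz
            obtain ⟨i, _, rfl⟩ := Multiset.mem_map.1 hz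
            exact Finset.mem_coe.2 (Finset.mem_image_of_mem _ (hf i))
          · have : (Finset.univ.val.map (fun i => a - f i)).sum = ∑ i : Fin N, (a - f i) := rfl
            rw [this, hq', Finset.sum_sub_distrib, Finset.sum_const, Finset.card_univ,
              Fintype.card_fin]
      exact hq.2.2 hqP
  · -- RHS ⊆ NA
    rintro y ⟨⟨hyhull, ⟨x, hxmem, rfl⟩⟩, hynot⟩
    rcases Nat.eq_zero_or_pos N with hN0 | hN0
    · subst hN0
      obtain ⟨c, -, hcx⟩ := Set.mem_smul_set.1 hyhull
      rw [Nat.cast_zero, zero_smul] at hcx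
      have hx0 : x = 0 := emb_injective (by rw [← hcx]; simp)
      exact ⟨x, by rw [hx0]; exact zero_mem_nfold_zero, rfl⟩
    obtain ⟨z, hz, hxz⟩ := Set.mem_smul_set.1 hyhull
    rw [← hhull] at hz
    obtain ⟨t, ht0, htsum, hrep⟩ := hull_rep hbinj hbB hBb hz
    set τ : Fin (d+1) → ℝ := fun j => (N:ℝ) * t j with hτ
    have hτ0 : ∀ j, 0 ≤ τ j := fun j => mul_nonneg (Nat.cast_nonneg N) (ht0 j)
    have hτsum : ∑ j, τ j = (N:ℝ) := by
      rw [hτ, ← Finset.mul_sum, htsum, mul_one]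
    have hembx : emb d x = ∑ j, τ j • emb d (b j) := by
      rw [← hxz, hrep, Finset.smul_sum]
      refine Finset.sum_congr rfl fun j _ => ?_
      simp only [hτ]
      exact smul_smul _ _ _
    obtain ⟨k, -, hkmax⟩ := Finset.exists_max_image Finset.univ τ ⟨0, Finset.mem_univ 0⟩
    have hτk : (N:ℝ) ≤ ((d:ℝ)+1) * τ k := by
      have h1 : ∑ j, τ j ≤ ∑ _j : Fin (d+1), τ k :=
        Finset.sum_le_sum fun j _ => hkmax j (Finset.mem_univ j)
      rw [hτsum, Finset.sum_const, Finset.card_univ, Fintype.card_fin] at h1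
      calc (N:ℝ) ≤ (d+1 : ℕ) • τ k := h1
        _ = ((d:ℝ)+1) * τ k := by
            rw [nsmul_eq_mul]
            push_cast
            ring
    set u := N • b k - x with hu
    have hxu : x = N • b k - u := by rw [hu]; abel
    by_cases hu0 : u = 0
    · refine ⟨x, ?_, rfl⟩
      have : x = N • b k := by rw [hxu, hu0]; abel
      rw [this]
      exact nsmul_mem_nfold (Finset.mem_coe.2 (hB (hbB k))) N
    · -- u avoids the exceptional set
      have hembu : emb d u = ∑ j, τ j • (emb d (b k) - emb d (b j)) := by
        have h3 : (N:ℝ) • emb d (b k) = ∑ j, τ j • emb d (b k) := by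
          rw [← Finset.sum_smul, hτsum]
        rw [hu, emb_sub, emb_nsmul, hembx, h3, ← Finset.sum_sub_distrib]
        exact Finset.sum_congr rfl fun j _ => (smul_sub _ _ _).symm
      have hcone : emb d u ∈ cone d (A.image fun y => b k - y) := by
        set c : (Fin d → ℤ) → ℝ :=
          fun z => ∑ j ∈ Finset.univ.filter (fun j => b k - b j = z), τ j with hc
        refine ⟨c, fun z => Finset.sum_nonneg fun j _ => hτ0 j, ?_⟩
        have hmaps : ∀ j ∈ (Finset.univ : Finset (Fin (d+1))),
            b k - b j ∈ A.image fun y => b k - y :=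
          fun j _ => Finset.mem_image_of_mem _ (hB (hbB j))
        have hfib := Finset.sum_fiberwise_of_maps_to hmaps (fun j => τ j • emb d (b k - b j))
        have hterm : ∀ z ∈ A.image fun y => b k - y,
            c z • emb d z = ∑ j ∈ Finset.univ.filter (fun j => b k - b j = z),
              τ j • emb d (b k - b j) := by
          intro z _
          rw [hc, Finset.sum_smul]
          refine Finset.sum_congr rfl fun j hj => ?_
          rw [(Finset.mem_filter.1 hj).2]
        rw [Finset.sum_congr rfl hterm, hfib, hembu]
        exact (Finset.sum_congr rfl fun j _ => by rw [emb_sub]).symm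
      have hlat : u ∈ latt d ↑(A.image fun y => b k - y) := by
        obtain ⟨p, hp, q, hq, hpq⟩ := Set.mem_add.1 hxmem
        rw [Set.mem_singleton_iff.1 hp] at hpq
        have hq' : u = N • (b k - a0) - q := by
          rw [hu, ← hpq]
          rw [smul_sub]
          abel
        have hle : latt d ((A : Set (Fin d → ℤ)) - (A : Set (Fin d → ℤ))) ≤
            latt d ↑(A.image fun y => b k - y) := by
          refine AddSubgroup.closure_le _ |>.2 ?_
          intro w hw
          obtain ⟨a1, ha1, a2, ha2, hw'⟩ := Set.mem_sub.1 hw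
          have h1 : b k - a2 ∈ (↑(A.image fun y => b k - y) : Set (Fin d → ℤ)) :=
            Finset.mem_coe.2 (Finset.mem_image_of_mem _ ha2)
          have h2 : b k - a1 ∈ (↑(A.image fun y => b k - y) : Set (Fin d → ℤ)) :=
            Finset.mem_coe.2 (Finset.mem_image_of_mem _ ha1)
          have hww : w = (b k - a2) - (b k - a1) := by rw [← hw']; abel
          rw [hww]
          exact SetLike.mem_coe.2
            (sub_mem (AddSubgroup.subset_closure h1) (AddSubgroup.subset_closure h2))
        rw [hq']
        refine sub_mem ?_ (hle hq)
        refine AddSubgroup.nsmul_mem _ (AddSubgroup.subset_closure ?_) N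
        exact Finset.mem_coe.2 (Finset.mem_image_of_mem _ ha0)
      have hunotE : u ∉ excep d (A.image fun y => b k - y) := by
        intro hE
        apply hynot
        refine Set.mem_iUnion₂.2 ⟨b k, ?_, ⟨x, ?_, rfl⟩⟩
        · rw [hexP]
          exact Finset.mem_coe.2 (hbB k)
        · exact Set.mem_sub.2 ⟨N • b k, rfl, u, hE, by rw [hxu]⟩
      have huP : u ∈ PA d ↑(A.image fun y => b k - y) := by
        by_contra hnP
        exact hunotE ⟨hcone, hlat, hnP⟩
      obtain ⟨m, n, w, hMeq, hnk, hmK, hwnf, hudecomp⟩ :=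
        key_decomp hB hbinj hbB hBb hexP h0B hKup hu0 huP
      set M := NAfn d ↑(A.image fun y => b k - y) u with hM
      have hsp : ⊤ ≤ Submodule.span ℝ (Set.range (vfam b k)) := span_vfam hspan hBb k
      -- coordinates of emb w are nonnegative
      have hw_nonneg : ∀ j : {j : Fin (d+1) // j ≠ k}, 0 ≤ (basK hsp).coord j (emb d w) := by
        intro j
        obtain ⟨mw, hmwc, hmwA, hmws⟩ := mem_nfold_iff.1 hwnf
        rw [← hmws, emb_multiset_sum]
        have : ((mw.map (emb d)).map ((basK hsp).coord j)).sum =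
            (basK hsp).coord j (mw.map (emb d)).sum := (map_multiset_sum _ _).symm
        rw [← this]
        refine Multiset.sum_nonneg ?_
        intro r hr
        obtain ⟨r2, hr2, rfl⟩ := Multiset.mem_map.1 hr
        obtain ⟨z2, hz2, rfl⟩ := Multiset.mem_map.1 hr2
        obtain ⟨a2, ha2, rfl⟩ := Finset.mem_image.1 (hmwA z2 hz2)
        rw [emb_sub]
        refine coord_nonneg hbinj hbB hBb hsp j ?_
        rw [hhull]
        exact subset_convexHull ℝ _ ⟨a2, ha2, rfl⟩
      -- coordinates of emb u
      have hcoord_u : ∀ j : {j : Fin (d+1) // j ≠ k},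
          (basK hsp).coord j (emb d u) = τ ↑j := by
        intro j
        rw [hembu]
        exact coord_combo hsp j τ
      have hcoord_u2 : ∀ j : {j : Fin (d+1) // j ≠ k},
          (basK hsp).coord j (emb d u) = (n ↑j : ℝ) + (basK hsp).coord j (emb d w) := by
        intro j
        rw [hudecomp, emb_add, map_add]
        have : emb d (∑ j', n j' • (b k - b j')) =
            ∑ j', (n j' : ℝ) • (emb d (b k) - emb d (b j')) := by
          rw [emb_sum]
          exact Finset.sum_congr rfl fun j' _ => by rw [emb_nsmul, emb_sub]
        rw [this, coord_combo hsp j (fun j' => (n j' : ℝ))]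
        ring
      have hnτ : ∀ j : Fin (d+1), j ≠ k → (n j : ℝ) ≤ τ j := by
        intro j hj
        have h1 := hcoord_u ⟨j, hj⟩
        have h2 := hcoord_u2 ⟨j, hj⟩
        have h3 := hw_nonneg ⟨j, hj⟩
        rw [h2] at h1
        linarith
      -- the total count is at most N
      have hsum_n : ((∑ j, n j : ℕ) : ℝ) ≤ (N:ℝ) - τ k := by
        have hsplit : (∑ j, n j) = ∑ j ∈ Finset.univ.erase k, n j := by
          rw [← Finset.sum_erase_add Finset.univ n (Finset.mem_univ k), hnk, add_zero]
        have hcast : ((∑ j, n j : ℕ) : ℝ) = ∑ j ∈ Finset.univ.erase k, (n j : ℝ) := by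
          rw [hsplit]
          push_cast
          rfl
        rw [hcast]
        have h1 : ∑ j ∈ Finset.univ.erase k, (n j : ℝ) ≤ ∑ j ∈ Finset.univ.erase k, τ j :=
          Finset.sum_le_sum fun j hj => hnτ j (Finset.mem_erase.1 hj).1
        have h2 : ∑ j ∈ Finset.univ.erase k, τ j = (N:ℝ) - τ k := by
          have := Finset.sum_erase_add Finset.univ τ (Finset.mem_univ k)
          rw [hτsum] at this
          linarith
        linarith
    -- K - 1 < τ k
      have hτK : (K:ℝ) - 1 < τ k := by
        have hNR : ((d:ℝ) + 1) * ((K:ℝ) - 1) + 1 ≤ (N:ℝ) := by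
          have := hN
          push_cast at this ⊢
          exact_mod_cast this
        have hd1 : (0:ℝ) < (d:ℝ) + 1 := by positivity
        nlinarith [hτk]
      have hMN : M ≤ N := by
        have h1 : (M:ℝ) = (m:ℝ) + ((∑ j, n j : ℕ) : ℝ) := by
          rw [hMeq]
          push_cast
          ring
        have h2 : (M:ℝ) < (N:ℝ) + 1 := by
          have hmKr : (m:ℝ) ≤ (K:ℝ) := Nat.cast_le.2 hmK
          linarith [hsum_n, hτK, h1]
        have : M < N + 1 := by exact_mod_cast h2
        omega
      -- assemble the representation of x
      have huM : u ∈ nfold d ↑(A.image fun y => b k - y) M := (NAfn_spec hu0 huP).2.1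
      obtain ⟨mu, hcmu, hmemu, hsumu⟩ := mem_nfold_iff.1 huM
      refine ⟨x, mem_nfold_iff.2 ⟨mu.map (fun z => b k - z) + Multiset.replicate (N - M) (b k),
        ?_, ?_, ?_⟩, rfl⟩
      · simp only [Multiset.card_add, Multiset.card_map, Multiset.card_replicate, hcmu]
        omega
      · intro z hz
        rcases Multiset.mem_add.1 hz with hz | hz
        · obtain ⟨z2, hz2, rfl⟩ := Multiset.mem_map.1 hz
          exact Finset.mem_coe.2 (hsubA' k z2 (hmemu z2 hz2))
        · rw [Multiset.eq_of_mem_replicate hz]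
          exact Finset.mem_coe.2 (hB (hbB k))
      · rw [Multiset.sum_add, map_sub_sum, hcmu, hsumu, Multiset.sum_replicate]
        have hns : M • b k + (N - M) • b k = N • b k := by
          rw [← add_nsmul]
          congr 1
          omega
        calc M • b k - u + (N - M) • b k = (M • b k + (N - M) • b k) - u := by abel
          _ = N • b k - u := by rw [hns]
          _ = x := by rw [hxu]
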